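/- The pure cactus group PJ_3 is infinite cyclic, generated by (s_{1,2} s_{1,3})³: the subgroup PJ_3 of J_3 equals the subgroup generated by the element (s_{1,2} s_{1,3})³, and this element has infinite order, so PJ_3 ≅ ℤ. -/

import Mathlib

/-- The set of intervals `[p,q]`, `1 ≤ p < q ≤ n`, indexing the generators `s_{p,q}`
of the cactus group `J_n`. -/
def cactusSet (n : ℕ) : Set (ℕ × ℕ) := {pq | 1 ≤ pq.1 ∧ pq.1 < pq.2 ∧ pq.2 ≤ n}

/-- The defining relations (j1)-(j3) of the cactus group, restricted to a collection `C`
of generating intervals: exactly those cactus relations involving only generators from `C`. -/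
def cactusRels (C : Set (ℕ × ℕ)) : Set (FreeGroup C) :=
  {w | (∃ a : C, w = FreeGroup.of a * FreeGroup.of a) ∨
    (∃ a b : C, (a.1.2 < b.1.1 ∨ b.1.2 < a.1.1) ∧
      w = FreeGroup.of a * FreeGroup.of b * (FreeGroup.of a)⁻¹ * (FreeGroup.of b)⁻¹) ∨
    (∃ a b c : C, a.1.1 ≤ b.1.1 ∧ b.1.2 ≤ a.1.2 ∧
      c.1.1 = a.1.1 + a.1.2 - b.1.2 ∧ c.1.2 = a.1.1 + a.1.2 - b.1.1 ∧
      w = FreeGroup.of a * FreeGroup.of b * (FreeGroup.of a)⁻¹ * (FreeGroup.of c)⁻¹)}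

/-- The group presented by the generators `s_I`, `I ∈ C`, and those cactus relations
involving only these generators. -/
abbrev PartialCactusGroup (C : Set (ℕ × ℕ)) := PresentedGroup (cactusRels C)

/-- The cactus group `J_n`. -/
abbrev CactusGroup (n : ℕ) := PartialCactusGroup (cactusSet n)

/-- The involution of `{0,…,n-1}` underlying the permutation `w_{p,q}` (in `1`-based labelling:
the point `i` corresponds to the label `i+1 ∈ {1,…,n}`): it sends a label `i` with `p ≤ i ≤ q`
to `p + q - i` and fixes all other labels. -/
def wFun (n p q : ℕ) (i : Fin n) : Fin n :=
  if h : 1 ≤ p ∧ p ≤ (i : ℕ) + 1 ∧ (i : ℕ) + 1 ≤ q ∧ q ≤ n then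
    ⟨p + q - ((i : ℕ) + 1) - 1, by omega⟩
  else i

lemma wFun_involutive (n p q : ℕ) : Function.Involutive (wFun n p q) := by
  intro i
  unfold wFun
  by_cases h : 1 ≤ p ∧ p ≤ (i : ℕ) + 1 ∧ (i : ℕ) + 1 ≤ q ∧ q ≤ n
  · rw [dif_pos h, dif_pos (by simp only [Fin.val_mk]; omega)]
    apply Fin.ext
    simp only [Fin.val_mk]
    omega
  · rw [dif_neg h, dif_neg h]

/-- The permutation `w_{p,q}` of `{1,…,n}` (coded on `Fin n` via `i ↦ i+1`), sending `i` to
`p+q-i` for `p ≤ i ≤ q` and fixing all other points. -/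
def wPerm (n p q : ℕ) : Equiv.Perm (Fin n) :=
  Function.Involutive.toPerm (wFun n p q) (wFun_involutive n p q)

lemma wPerm_apply_val (n p q : ℕ) (i : Fin n) :
    ((wPerm n p q i : Fin n) : ℕ) =
      if 1 ≤ p ∧ p ≤ (i : ℕ) + 1 ∧ (i : ℕ) + 1 ≤ q ∧ q ≤ n then p + q - ((i : ℕ) + 1) - 1
      else i := by
  rw [wPerm, Function.Involutive.coe_toPerm]
  unfold wFun
  split_ifs with h <;> rfl

lemma wPerm_inv (n p q : ℕ) : (wPerm n p q)⁻¹ = wPerm n p q := by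
  simp [wPerm, Equiv.Perm.inv_def, Function.Involutive.toPerm_symm]

lemma wPerm_rels (n : ℕ) : ∀ r ∈ cactusRels (cactusSet n),
    FreeGroup.lift (fun a : cactusSet n => wPerm n a.1.1 a.1.2) r = 1 := by
  rintro r (⟨a, rfl⟩ | ⟨a, b, hab, rfl⟩ | ⟨a, b, c, h1, h2, h3, h4, rfl⟩) <;>
    simp only [map_mul, map_inv, FreeGroup.lift_apply_of, wPerm_inv]
  · obtain ⟨ha1, ha2, ha3⟩ := a.2
    ext i
    simp only [Equiv.Perm.mul_apply, Equiv.Perm.one_apply, wPerm_apply_val]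
    split_ifs <;> omega
  · obtain ⟨ha1, ha2, ha3⟩ := a.2
    obtain ⟨hb1, hb2, hb3⟩ := b.2
    ext i
    simp only [Equiv.Perm.mul_apply, Equiv.Perm.one_apply, wPerm_apply_val]
    split_ifs <;> omega
  · obtain ⟨ha1, ha2, ha3⟩ := a.2
    obtain ⟨hb1, hb2, hb3⟩ := b.2
    obtain ⟨hc1, hc2, hc3⟩ := c.2
    ext i
    simp only [Equiv.Perm.mul_apply, Equiv.Perm.one_apply, wPerm_apply_val]
    split_ifs <;> omega

/-- The canonical projection `s : J_n → S_n`, sending `s_{p,q}` to `w_{p,q}`. -/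
def sHom (n : ℕ) : CactusGroup n →* Equiv.Perm (Fin n) :=
  PresentedGroup.toGroup (f := fun a => wPerm n a.1.1 a.1.2) (wPerm_rels n)

/-- The pure cactus group `PJ_n`, i.e. the kernel of `s : J_n → S_n`. -/
abbrev PureCactusGroup (n : ℕ) : Subgroup (CactusGroup n) := (sHom n).ker


/-- The generator `s_{1,2}` of `J_3`. -/
def s12 : CactusGroup 3 := PresentedGroup.of ⟨(1, 2), ⟨by omega, by omega, by omega⟩⟩

/-- The generator `s_{1,3}` of `J_3`. -/
def s13 : CactusGroup 3 := PresentedGroup.of ⟨(1, 3), ⟨by omega, by omega, by omega⟩⟩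


section Aux

variable {α : Type*} {rels : Set (FreeGroup α)}

lemma presented_rel_eq_one {w : FreeGroup α} (h : w ∈ rels) :
    PresentedGroup.mk rels w = 1 :=
  (QuotientGroup.eq_one_iff _).2 (Subgroup.subset_normalClosure h)

end Aux

def g12 : cactusSet 3 := ⟨(1, 2), ⟨by omega, by omega, by omega⟩⟩
def g13 : cactusSet 3 := ⟨(1, 3), ⟨by omega, by omega, by omega⟩⟩
def g23 : cactusSet 3 := ⟨(2, 3), ⟨by omega, by omega, by omega⟩⟩

def s23 : CactusGroup 3 := PresentedGroup.of g23

lemma s12_def : s12 = PresentedGroup.of g12 := rfl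
lemma s13_def : s13 = PresentedGroup.of g13 := rfl

lemma sq_one (a : cactusSet 3) :
    (PresentedGroup.of a : CactusGroup 3) * PresentedGroup.of a = 1 :=
  presented_rel_eq_one (Or.inl ⟨a, rfl⟩)

lemma s12_sq : s12 * s12 = 1 := sq_one g12
lemma s13_sq : s13 * s13 = 1 := sq_one g13

lemma cancel12 (x : CactusGroup 3) : s12 * (s12 * x) = x := by
  rw [← mul_assoc, s12_sq, one_mul]
lemma cancel13 (x : CactusGroup 3) : s13 * (s13 * x) = x := by
  rw [← mul_assoc, s13_sq, one_mul]

lemma s12_inv : s12⁻¹ = s12 := by rw [inv_eq_iff_mul_eq_one]; exact s12_sq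
lemma s13_inv : s13⁻¹ = s13 := by rw [inv_eq_iff_mul_eq_one]; exact s13_sq

lemma s13_conj_s12 : s13 * s12 * s13⁻¹ = s23 := by
  have h : (PresentedGroup.mk (cactusRels (cactusSet 3))
      (FreeGroup.of g13 * FreeGroup.of g12 * (FreeGroup.of g13)⁻¹ * (FreeGroup.of g23)⁻¹))
      = 1 := by
    refine presented_rel_eq_one (Or.inr (Or.inr ⟨g13, g12, g23, ?_, ?_, ?_, ?_, rfl⟩)) <;>
      simp [g12, g13, g23]
  simp only [map_mul, map_inv] at h
  have := mul_eq_one_iff_eq_inv.mp h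
  rw [inv_inv] at this
  exact this

lemma s23_eq : s23 = s13 * (s12 * s13) := by
  rw [← s13_conj_s12, s13_inv, mul_assoc]

lemma t_inv : (s12 * s13)⁻¹ = s13 * s12 := by rw [mul_inv_rev, s12_inv, s13_inv]

lemma a_t_a : s12 * (s12 * s13) * s12⁻¹ = (s12 * s13)⁻¹ := by
  rw [t_inv, s12_inv, cancel12]

lemma a_zpow (k : ℤ) : s12 * (s12 * s13) ^ k = (s12 * s13) ^ (-k) * s12 := by
  have h : s12 * (s12 * s13) ^ k * s12⁻¹ = ((s12 * s13) ^ k)⁻¹ := by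
    rw [← conj_zpow, a_t_a, inv_zpow]
  rw [← zpow_neg] at h
  calc s12 * (s12 * s13) ^ k = s12 * (s12 * s13) ^ k * s12⁻¹ * s12 := by
        rw [inv_mul_cancel_right]
    _ = (s12 * s13) ^ (-k) * s12 := by rw [h]

/-- The normal-form subgroup: everything of the form `t^k` or `t^k * s12`. -/
def nfSubgroup : Subgroup (CactusGroup 3) where
  carrier := {g | ∃ k : ℤ, g = (s12 * s13) ^ k ∨ g = (s12 * s13) ^ k * s12}
  one_mem' := ⟨0, Or.inl (by simp)⟩
  mul_mem' := by
    rintro x y ⟨j, hj | hj⟩ ⟨k, hk | hk⟩ <;> subst hj hk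
    · exact ⟨j + k, Or.inl (zpow_add _ j k).symm⟩
    · exact ⟨j + k, Or.inr (by rw [← mul_assoc, ← zpow_add])⟩
    · refine ⟨j - k, Or.inr ?_⟩
      rw [mul_assoc, a_zpow, ← mul_assoc, ← zpow_add, ← sub_eq_add_neg]
    · refine ⟨j - k, Or.inl ?_⟩
      calc (s12 * s13) ^ j * s12 * ((s12 * s13) ^ k * s12)
          = (s12 * s13) ^ j * (s12 * (s12 * s13) ^ k) * s12 := by
            rw [mul_assoc, mul_assoc, mul_assoc]
        _ = (s12 * s13) ^ j * ((s12 * s13) ^ (-k) * s12) * s12 := by rw [a_zpow]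
        _ = (s12 * s13) ^ j * (s12 * s13) ^ (-k) * (s12 * s12) := by
            rw [mul_assoc, mul_assoc, mul_assoc]
        _ = (s12 * s13) ^ (j - k) := by rw [s12_sq, mul_one, ← zpow_add, ← sub_eq_add_neg]
  inv_mem' := by
    rintro x ⟨k, hk | hk⟩ <;> subst hk
    · exact ⟨-k, Or.inl (by rw [← zpow_neg])⟩
    · refine ⟨k, Or.inr ?_⟩
      rw [mul_inv_rev, s12_inv, ← zpow_neg, a_zpow, neg_neg]

lemma mem_nf (g : CactusGroup 3) :
    ∃ k : ℤ, g = (s12 * s13) ^ k ∨ g = (s12 * s13) ^ k * s12 := by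
  refine PresentedGroup.generated_by _ nfSubgroup (fun j => ?_) g
  obtain ⟨⟨p, q⟩, h1, h2, h3⟩ := j
  have : (p = 1 ∧ q = 2) ∨ (p = 1 ∧ q = 3) ∨ (p = 2 ∧ q = 3) := by omega
  rcases this with ⟨rfl, rfl⟩ | ⟨rfl, rfl⟩ | ⟨rfl, rfl⟩
  · exact ⟨0, Or.inr (by rw [zpow_zero, one_mul]; rfl)⟩
  · refine ⟨-1, Or.inr ?_⟩
    show s13 = (s12 * s13) ^ (-1 : ℤ) * s12
    rw [zpow_neg_one, t_inv, mul_assoc, s12_sq, mul_one]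
  · refine ⟨-2, Or.inr ?_⟩
    show s23 = (s12 * s13) ^ (-2 : ℤ) * s12
    have h2 : ((s12 * s13) ^ (-2 : ℤ)) = (s13 * s12) * (s13 * s12) := by
      rw [show (-2 : ℤ) = -1 + -1 from rfl, zpow_add, zpow_neg_one, t_inv]
    rw [s23_eq, h2, mul_assoc, mul_assoc, mul_assoc, s12_sq, mul_one]

-- the homomorphism to the infinite dihedral group
open DihedralGroup in
def dihFun (a : cactusSet 3) : DihedralGroup 0 :=
  if a.1 = (1, 2) then sr 0 else if a.1 = (2, 3) then sr 2 else sr 1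

open DihedralGroup in
lemma dihFun12 (h : (1,2) ∈ cactusSet 3) : dihFun ⟨(1,2),h⟩ = sr 0 := rfl
open DihedralGroup in
lemma dihFun13 (h : (1,3) ∈ cactusSet 3) : dihFun ⟨(1,3),h⟩ = sr 1 := rfl
open DihedralGroup in
lemma dihFun23 (h : (2,3) ∈ cactusSet 3) : dihFun ⟨(2,3),h⟩ = sr 2 := rfl

open DihedralGroup in
lemma dih_rels : ∀ w ∈ cactusRels (cactusSet 3), FreeGroup.lift dihFun w = 1 := by
  rintro w (⟨a, rfl⟩ | ⟨a, b, hab, rfl⟩ | ⟨a, b, c, h1, h2, h3, h4, rfl⟩) <;>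
    simp only [map_mul, map_inv, FreeGroup.lift_apply_of]
  · unfold dihFun; split_ifs <;> exact sr_mul_self _
  · exfalso
    obtain ⟨⟨p, q⟩, hp⟩ := a
    obtain ⟨⟨m, r⟩, hm⟩ := b
    simp only [cactusSet, Set.mem_setOf_eq] at hp hm
    dsimp at hab
    omega
  · obtain ⟨⟨p, q⟩, hp⟩ := a
    obtain ⟨⟨m, r⟩, hm⟩ := b
    obtain ⟨⟨u, v⟩, hu⟩ := c
    simp only [cactusSet, Set.mem_setOf_eq] at hp hm hu
    have H1 : p ≤ m := h1
    have H2 : r ≤ q := h2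
    have H3 : u = p + q - r := h3
    have H4 : v = p + q - m := h4
    clear h1 h2 h3 h4
    have hpq : (p = 1 ∧ q = 2) ∨ (p = 1 ∧ q = 3) ∨ (p = 2 ∧ q = 3) := by omega
    have hmr : (m = 1 ∧ r = 2) ∨ (m = 1 ∧ r = 3) ∨ (m = 2 ∧ r = 3) := by omega
    have huv : (u = 1 ∧ v = 2) ∨ (u = 1 ∧ v = 3) ∨ (u = 2 ∧ v = 3) := by omega
    rcases hpq with ⟨rfl, rfl⟩ | ⟨rfl, rfl⟩ | ⟨rfl, rfl⟩ <;>
      rcases hmr with ⟨rfl, rfl⟩ | ⟨rfl, rfl⟩ | ⟨rfl, rfl⟩ <;>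
      rcases huv with ⟨rfl, rfl⟩ | ⟨rfl, rfl⟩ | ⟨rfl, rfl⟩ <;>
      first
        | (exfalso; omega)
        | (simp only [dihFun12, dihFun13, dihFun23]; decide)

def dihHom : CactusGroup 3 →* DihedralGroup 0 := PresentedGroup.toGroup dih_rels

open DihedralGroup in
lemma dihHom_t : dihHom (s12 * s13) = r 1 := by
  rw [map_mul, s12_def, s13_def, dihHom, PresentedGroup.toGroup.of, PresentedGroup.toGroup.of]
  decide

-- properties of the image in S₃
lemma sHom_t : sHom 3 (s12 * s13) = wPerm 3 1 2 * wPerm 3 1 3 := by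
  rw [map_mul, s12_def, s13_def, sHom, PresentedGroup.toGroup.of, PresentedGroup.toGroup.of]
  rfl

lemma sHom_s12 : sHom 3 s12 = wPerm 3 1 2 := by
  rw [s12_def, sHom, PresentedGroup.toGroup.of]
  rfl

lemma sigma_cube : (wPerm 3 1 2 * wPerm 3 1 3) ^ 3 = 1 := by decide

lemma sigma_ne_one : (wPerm 3 1 2 * wPerm 3 1 3) ≠ 1 := by decide

lemma sigma_order : orderOf (wPerm 3 1 2 * wPerm 3 1 3) = 3 :=
  orderOf_eq_prime sigma_cube sigma_ne_one

lemma sign_sigma : Equiv.Perm.sign (wPerm 3 1 2 * wPerm 3 1 3) = 1 := by decide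
lemma sign_tau : Equiv.Perm.sign (wPerm 3 1 2) = -1 := by decide

theorem pj3_infinite_cyclic' :
    PureCactusGroup 3 = Subgroup.zpowers ((s12 * s13) ^ 3) ∧
    ¬ IsOfFinOrder ((s12 * s13) ^ 3) := by
  constructor
  · ext g
    simp only [MonoidHom.mem_ker, Subgroup.mem_zpowers_iff]
    constructor
    · intro hg
      obtain ⟨k, hk | hk⟩ := mem_nf g
      · subst hk
        rw [map_zpow, sHom_t] at hg
        have h3 : ((3 : ℕ) : ℤ) ∣ k := by
          rw [← sigma_order]
          exact orderOf_dvd_iff_zpow_eq_one.mpr hg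
        obtain ⟨m, rfl⟩ := h3
        exact ⟨m, by rw [← zpow_natCast, ← zpow_mul]⟩
      · exfalso
        subst hk
        rw [map_mul, map_zpow, sHom_t, sHom_s12] at hg
        have := congrArg Equiv.Perm.sign hg
        rw [map_mul, map_zpow, sign_sigma, sign_tau, one_zpow, one_mul, map_one] at this
        exact absurd this (by decide)
    · rintro ⟨m, rfl⟩
      rw [← zpow_natCast, ← zpow_mul, map_zpow, sHom_t]
      rw [← orderOf_dvd_iff_zpow_eq_one, sigma_order]
      exact ⟨m, by ring⟩
  · intro hfin
    obtain ⟨n, hn, h1⟩ := hfin.exists_pow_eq_one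
    apply absurd (congrArg dihHom h1)
    rw [map_pow, map_pow, dihHom_t, map_one]
    rw [← pow_mul, DihedralGroup.r_one_pow, DihedralGroup.one_def]
    intro h
    injection h with h'
    have h2 : ((3 * n : ℕ) : ZMod 0) = ((0 : ℕ) : ZMod 0) := by exact_mod_cast h'
    have h0 : (3 * n : ℕ) = 0 := by exact_mod_cast h2
    omega


/-- The pure cactus group `PJ_3` is infinite cyclic, generated by
`(s_{1,2} s_{1,3})³`. -/
theorem pj3_infinite_cyclic :
    PureCactusGroup 3 = Subgroup.zpowers ((s12 * s13) ^ 3) ∧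
    ¬ IsOfFinOrder ((s12 * s13) ^ 3) := by
  exact pj3_infinite_cyclic'
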